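/- If ρ : S² → ℝ is continuous, axisymmetric (ρ(p) = f(p·e) for some e ∈ S² and continuous f : [−1,1] → ℝ), and has cubic symmetry (ρ(Qp) = ρ(p) for all Q in the cubic group P⁴⁸ and all p ∈ S²), then ρ is constant. -/

import Mathlib

/-- The cubic group `P⁴⁸` of signed permutation matrices. -/
def P48 : Set (Matrix (Fin 3) (Fin 3) ℝ) :=
  {Q | ∃ (σ : Equiv.Perm (Fin 3)) (ε : Fin 3 → ℝ), (∀ i, ε i = 1 ∨ ε i = -1) ∧
    ∀ i j, Q i j = if j = σ i then ε i else 0}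

open scoped RealInnerProductSpace
open Matrix

/-- coercion of a plain vector into Euclidean space -/
def AxiAux.toE (v : Fin 3 → ℝ) : EuclideanSpace ℝ (Fin 3) := WithLp.toLp 2 v

namespace AxiAux

lemma mulVec_entry {Q : Matrix (Fin 3) (Fin 3) ℝ} {σ : Equiv.Perm (Fin 3)} {ε : Fin 3 → ℝ}
    (hQ : ∀ i j, Q i j = if j = σ i then ε i else 0) (p : Fin 3 → ℝ) (i : Fin 3) :
    Q.mulVec p i = ε i * p (σ i) := by
  simp only [Matrix.mulVec, dotProduct]
  rw [Finset.sum_eq_single (σ i)]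
  · rw [hQ]; simp
  · intro j _ hj; rw [hQ]; simp [hj]
  · simp

lemma P48_sphere {Q : Matrix (Fin 3) (Fin 3) ℝ} (hQ : Q ∈ P48)
    {p : EuclideanSpace ℝ (Fin 3)} (hp : p ∈ Metric.sphere (0 : EuclideanSpace ℝ (Fin 3)) 1) :
    toE (Q.mulVec p) ∈ Metric.sphere (0 : EuclideanSpace ℝ (Fin 3)) 1 := by
  obtain ⟨σ, ε, hε, h⟩ := hQ
  rw [mem_sphere_zero_iff_norm] at hp ⊢
  rw [EuclideanSpace.norm_eq] at hp ⊢
  rw [show (∑ i, ‖toE (Q.mulVec p) i‖ ^ 2) = ∑ i, ‖p i‖^2 from ?_]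
  · exact hp
  · rw [← Equiv.sum_comp σ (fun j => ‖p j‖ ^ 2)]
    refine Finset.sum_congr rfl fun i _ => ?_
    have h2 : toE (Q.mulVec p) i = ε i * p (σ i) := mulVec_entry h p i
    rcases hε i with h1 | h1 <;> simp [h2, h1, neg_mul]

lemma P48_transpose {Q : Matrix (Fin 3) (Fin 3) ℝ} (hQ : Q ∈ P48) : Qᵀ ∈ P48 := by
  obtain ⟨σ, ε, hε, h⟩ := hQ
  refine ⟨σ⁻¹, fun i => ε (σ⁻¹ i), fun i => hε _, fun i j => ?_⟩
  rw [Matrix.transpose_apply, h]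
  by_cases hij : j = σ⁻¹ i
  · simp [hij]
  · have h2 : i ≠ σ j := fun hc => hij (by simp [hc])
    rw [if_neg h2, if_neg hij]

lemma inner_mulVec (Q : Matrix (Fin 3) (Fin 3) ℝ) (p e : EuclideanSpace ℝ (Fin 3)) :
    ⟪toE (Q.mulVec p), e⟫ = ⟪p, toE (Qᵀ.mulVec e)⟫ := by
  simp only [PiLp.inner_apply, RCLike.inner_apply, conj_trivial]
  have h : ∀ (x y : Fin 3 → ℝ), ∑ i, x i * y i = dotProduct x y := fun _ _ => rfl
  show ∑ i, e i * Q.mulVec p i = ∑ i, Qᵀ.mulVec e i * p i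
  rw [h, h, Matrix.dotProduct_mulVec,
    ← Matrix.mulVec_transpose]

lemma exists_orth (e e' : EuclideanSpace ℝ (Fin 3)) :
    ∃ w : EuclideanSpace ℝ (Fin 3), ‖w‖ = 1 ∧ ⟪w, e⟫ = 0 ∧ ⟪w, e'⟫ = 0 := by
  classical
  set K := (Submodule.span ℝ ({e, e'} : Set (EuclideanSpace ℝ (Fin 3))))
  have hle : Module.finrank ℝ K ≤ 2 := by
    refine le_trans (finrank_span_le_card _) ?_
    rw [Set.toFinset_insert, Set.toFinset_singleton]
    exact le_trans (Finset.card_insert_le _ _) (by simp)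
  have hK : Kᗮ ≠ ⊥ := by
    intro hbot
    have h1 := Submodule.finrank_add_finrank_orthogonal K
    rw [finrank_euclideanSpace_fin, hbot, finrank_bot] at h1
    omega
  obtain ⟨w₀, hw₀K, hw₀⟩ := Submodule.exists_mem_ne_zero_of_ne_bot hK
  rw [Submodule.mem_orthogonal] at hw₀K
  have he0 : ⟪w₀, e⟫ = 0 := by
    rw [real_inner_comm]; exact hw₀K e (Submodule.subset_span (by simp))
  have he'0 : ⟪w₀, e'⟫ = 0 := by
    rw [real_inner_comm]; exact hw₀K e' (Submodule.subset_span (by simp))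
  refine ⟨‖w₀‖⁻¹ • w₀, ?_, ?_, ?_⟩
  · rw [norm_smul, norm_inv, norm_norm, inv_mul_cancel₀ (norm_ne_zero_iff.2 hw₀)]
  · rw [real_inner_smul_left, he0, mul_zero]
  · rw [real_inner_smul_left, he'0, mul_zero]

lemma exists_move (e : EuclideanSpace ℝ (Fin 3)) (he : ‖e‖ = 1) :
    ∃ M ∈ P48, toE (M.mulVec e) ≠ e ∧ toE (M.mulVec e) ≠ -e := by
  classical
  have hne : ∃ i, e i ≠ 0 := by
    by_contra hc
    push_neg at hc
    have h0 : e = 0 := by ext i; exact hc i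
    rw [h0, norm_zero] at he; norm_num at he
  obtain ⟨i, hi⟩ := hne
  by_cases hj : ∃ j, j ≠ i ∧ e j ≠ 0
  · -- flip the sign of coordinate i
    obtain ⟨j, hji, hj⟩ := hj
    set ε : Fin 3 → ℝ := fun k => if k = i then -1 else 1 with hε
    set M : Matrix (Fin 3) (Fin 3) ℝ := fun a b => if b = a then ε a else 0 with hM
    have hMP : M ∈ P48 := ⟨1, ε, fun k => by by_cases h : k = i <;> simp [hε, h], fun a b => rfl⟩
    have hent : ∀ k, toE (M.mulVec e) k = ε k * e k := fun k =>
      mulVec_entry (σ := 1) (ε := ε) (fun a b => rfl) e k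
    refine ⟨M, hMP, ?_, ?_⟩
    · intro hc
      have h1 : toE (M.mulVec e) i = e i := congrArg (fun v : EuclideanSpace ℝ (Fin 3) => v i) hc
      rw [hent i] at h1
      simp only [hε, if_pos rfl] at h1
      apply hi; linarith
    · intro hc
      have h1 : toE (M.mulVec e) j = (-e : EuclideanSpace ℝ (Fin 3)) j :=
        congrArg (fun v : EuclideanSpace ℝ (Fin 3) => v j) hc
      rw [hent j] at h1
      have hjj : (-e : EuclideanSpace ℝ (Fin 3)) j = -(e j) := rfl
      rw [hjj] at h1
      simp only [hε, if_neg hji] at h1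
      apply hj; linarith
  · -- e = ± a standard basis vector: swap coordinates i and j
    push_neg at hj
    set j : Fin 3 := if i = 0 then 1 else 0 with hjdef
    have hji : j ≠ i := by
      by_cases h : i = 0 <;> simp [hjdef, h]
      omega
    have hej : e j = 0 := hj j hji
    set σ : Equiv.Perm (Fin 3) := Equiv.swap i j with hσ
    set M : Matrix (Fin 3) (Fin 3) ℝ := fun a b => if b = σ a then 1 else 0 with hM
    have hMP : M ∈ P48 := ⟨σ, fun _ => 1, fun k => Or.inl rfl, fun a b => rfl⟩
    have hent : ∀ k, toE (M.mulVec e) k = e (σ k) := fun k => by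
      have := mulVec_entry (σ := σ) (ε := fun _ => 1) (fun a b => rfl) e k
      simp at this; exact this
    refine ⟨M, hMP, ?_, ?_⟩
    · intro hc
      have h1 : toE (M.mulVec e) j = e j := congrArg (fun v : EuclideanSpace ℝ (Fin 3) => v j) hc
      rw [hent j] at h1
      rw [hσ] at h1
      rw [Equiv.swap_apply_right] at h1
      rw [hej] at h1
      exact hi h1
    · intro hc
      have h1 : toE (M.mulVec e) j = (-e : EuclideanSpace ℝ (Fin 3)) j :=
        congrArg (fun v : EuclideanSpace ℝ (Fin 3) => v j) hc
      rw [hent j] at h1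
      have hjj : (-e : EuclideanSpace ℝ (Fin 3)) j = -(e j) := rfl
      rw [hjj, hσ, Equiv.swap_apply_right, hej, neg_zero] at h1
      exact hi h1

end AxiAux

open AxiAux in
/-- A continuous axisymmetric density on the sphere with cubic symmetry is constant. -/
theorem axisym_cubic_const (ρ : EuclideanSpace ℝ (Fin 3) → ℝ)
    (hρ : ContinuousOn ρ (Metric.sphere 0 1))
    (e : EuclideanSpace ℝ (Fin 3)) (he : ‖e‖ = 1)
    (f : ℝ → ℝ) (hf : ContinuousOn f (Set.Icc (-1) 1))
    (haxi : ∀ p ∈ Metric.sphere (0 : EuclideanSpace ℝ (Fin 3)) 1, ρ p = f (inner ℝ p e))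
    (hcubic : ∀ Q ∈ P48, ∀ p ∈ Metric.sphere (0 : EuclideanSpace ℝ (Fin 3)) 1,
      ρ (WithLp.toLp 2 (Q.mulVec p) : EuclideanSpace ℝ (Fin 3)) = ρ p) :
    ∀ p ∈ Metric.sphere (0 : EuclideanSpace ℝ (Fin 3)) 1,
      ∀ q ∈ Metric.sphere (0 : EuclideanSpace ℝ (Fin 3)) 1, ρ p = ρ q := by
  obtain ⟨M, hM, hMe, hMe'⟩ := exists_move e he
  set e' : EuclideanSpace ℝ (Fin 3) := toE (M.mulVec e) with he'def
  have heS : e ∈ Metric.sphere (0 : EuclideanSpace ℝ (Fin 3)) 1 := by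
    rwa [mem_sphere_zero_iff_norm]
  have he'n : ‖e'‖ = 1 := by
    have := P48_sphere hM heS
    rwa [mem_sphere_zero_iff_norm] at this
  set c : ℝ := ⟪e, e'⟫ with hcdef
  -- |c| < 1
  have hc1 : c ≠ 1 := fun h =>
    hMe (((inner_eq_one_iff_of_norm_eq_one he he'n).1 h).symm)
  have hcm1 : c ≠ -1 := by
    intro h
    have h2 : ⟪e, -e'⟫ = 1 := by
      rw [inner_neg_right, ← hcdef, h]; norm_num
    have h3 : e = -e' := (inner_eq_one_iff_of_norm_eq_one he (by rwa [norm_neg])).1 h2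
    exact hMe' (by rw [← neg_neg e', ← h3])
  have hcabs : |c| < 1 := by
    rcases lt_or_eq_of_le (abs_real_inner_le_norm e e') with h | h
    · rwa [he, he'n, mul_one] at h
    · exfalso
      rw [he, he'n, mul_one] at h
      rcases abs_eq (by norm_num : (0:ℝ) ≤ 1) |>.1 h with h | h
      · exact hc1 h
      · exact hcm1 h
  -- the key step : f u = f (c * u) for u ∈ [-1, 1]
  have key : ∀ u : ℝ, u ∈ Set.Icc (-1:ℝ) 1 → f u = f (c * u) := by
    intro u hu
    obtain ⟨w, hw, hwe, hwe'⟩ := exists_orth e e'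
    have hu2 : (0:ℝ) ≤ 1 - u^2 := by
      rcases hu with ⟨h1, h2⟩; nlinarith
    set p : EuclideanSpace ℝ (Fin 3) := u • e + Real.sqrt (1 - u^2) • w with hpdef
    have hew : ⟪e, w⟫ = 0 := by rw [real_inner_comm]; exact hwe
    have hpn : ‖p‖ = 1 := by
      have hsq : ‖p‖^2 = 1 := by
        rw [hpdef, norm_add_sq_real, real_inner_smul_left, real_inner_smul_right, hew,
          norm_smul, norm_smul, mul_pow, mul_pow, he, hw,
          Real.norm_eq_abs, Real.norm_eq_abs, sq_abs, sq_abs, Real.sq_sqrt hu2]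
        ring
      nlinarith [norm_nonneg p]
    have hpS : p ∈ Metric.sphere (0 : EuclideanSpace ℝ (Fin 3)) 1 := by
      rwa [mem_sphere_zero_iff_norm]
    have hpe : ⟪p, e⟫ = u := by
      rw [hpdef, inner_add_left, real_inner_smul_left, real_inner_smul_left,
        real_inner_self_eq_norm_sq, he, hwe]
      ring
    have hpe' : ⟪p, e'⟫ = c * u := by
      rw [hpdef, inner_add_left, real_inner_smul_left, real_inner_smul_left, hwe', ← hcdef]
      ring
    -- use the cubic symmetry with Q = Mᵀ
    set Q : Matrix (Fin 3) (Fin 3) ℝ := Mᵀ with hQdef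
    have hQP : Q ∈ P48 := P48_transpose hM
    have hQpS := P48_sphere hQP hpS
    have h1 : ρ (toE (Q.mulVec p)) = ρ p := hcubic Q hQP p hpS
    have h2 : ρ (toE (Q.mulVec p)) = f ⟪toE (Q.mulVec p), e⟫ := haxi _ hQpS
    have h3 : ⟪toE (Q.mulVec p), e⟫ = ⟪p, e'⟫ := by
      rw [inner_mulVec, hQdef, Matrix.transpose_transpose, ← he'def]
    have h4 : ρ p = f u := by rw [haxi p hpS, hpe]
    rw [h3, hpe'] at h2
    rw [h1, h4] at h2
    exact h2
  -- iterate : f u = f (c^n * u), take n → ∞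
  have hconst : ∀ u : ℝ, u ∈ Set.Icc (-1:ℝ) 1 → f u = f 0 := by
    intro u hu
    have habs : |u| ≤ 1 := abs_le.2 hu
    have hmem : ∀ n : ℕ, c^n * u ∈ Set.Icc (-1:ℝ) 1 := by
      intro n
      rw [Set.mem_Icc, ← abs_le, abs_mul, abs_pow]
      calc |c|^n * |u| ≤ 1 * 1 := by
            apply mul_le_mul _ habs (abs_nonneg u) zero_le_one
            exact pow_le_one₀ (abs_nonneg c) hcabs.le
        _ = 1 := by norm_num
    have hiter : ∀ n : ℕ, f u = f (c^n * u) := by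
      intro n
      induction n with
      | zero => simp
      | succ n ih =>
        rw [ih, key _ (hmem n)]
        ring_nf
    have htend : Filter.Tendsto (fun n : ℕ => c^n * u) Filter.atTop (nhds 0) := by
      have := (tendsto_pow_atTop_nhds_zero_of_abs_lt_one hcabs).mul_const u
      simpa using this
    have htendW : Filter.Tendsto (fun n : ℕ => c^n * u) Filter.atTop
        (nhdsWithin 0 (Set.Icc (-1:ℝ) 1)) :=
      tendsto_nhdsWithin_of_tendsto_nhds_of_eventually_within _ htend
        (Filter.Eventually.of_forall hmem)
    have hcont : Filter.Tendsto (fun n : ℕ => f (c^n * u)) Filter.atTop (nhds (f 0)) :=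
      (hf 0 (by norm_num)).tendsto.comp htendW
    have hconst2 : Filter.Tendsto (fun n : ℕ => f (c^n * u)) Filter.atTop (nhds (f u)) := by
      have : (fun n : ℕ => f (c^n * u)) = fun _ => f u := by
        funext n; exact (hiter n).symm
      rw [this]; exact tendsto_const_nhds
    exact tendsto_nhds_unique hconst2 hcont
  -- conclude
  intro p hp q hq
  have hmemp : ⟪p, e⟫ ∈ Set.Icc (-1:ℝ) 1 := by
    rw [Set.mem_Icc, ← abs_le]
    have := abs_real_inner_le_norm p e
    rw [mem_sphere_zero_iff_norm] at hp
    rw [hp, he] at this; simpa using this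
  have hmemq : ⟪q, e⟫ ∈ Set.Icc (-1:ℝ) 1 := by
    rw [Set.mem_Icc, ← abs_le]
    have := abs_real_inner_le_norm q e
    rw [mem_sphere_zero_iff_norm] at hq
    rw [hq, he] at this; simpa using this
  rw [haxi p hp, haxi q hq, hconst _ hmemp, hconst _ hmemq]
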